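/- Let s, b, q and n be integers with s ≥ 2, b ≥ 2, q ≥ 3, n ≥ 1 satisfying n·s^n = b·f_q(b), where f_q(b) = b^{q−2} + b^{q−3} + ⋯ + b + 1. Set u = gcd(b, s) and v = gcd(f_q(b), s). Then s = u·v with gcd(u, v) = 1, u^n divides b, and the integer k = b/u^n divides n. -/
import Mathlib


/-- Let `s ≥ 2`, `b ≥ 2`, `q ≥ 3`, `n ≥ 1` satisfy `n·s^n = b·f_q(b)` with
`f_q(b) = b^{q−2} + ⋯ + b + 1`.  With `u = gcd(b, s)` and `v = gcd(f_q(b), s)`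
we have `s = u·v`, `gcd(u, v) = 1`, `u^n ∣ b`, and `k = b/u^n` divides `n`. -/
theorem factorization_of_b (s b q n : ℕ) (hs : 2 ≤ s) (hb : 2 ≤ b) (hq : 3 ≤ q)
    (hn : 1 ≤ n)
    (heq : n * s ^ n = b * ∑ j ∈ Finset.range (q - 1), b ^ j) :
    s = Nat.gcd b s * Nat.gcd (∑ j ∈ Finset.range (q - 1), b ^ j) s ∧
    Nat.Coprime (Nat.gcd b s) (Nat.gcd (∑ j ∈ Finset.range (q - 1), b ^ j) s) ∧
    Nat.gcd b s ^ n ∣ b ∧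
    (b / Nat.gcd b s ^ n) ∣ n := by
  set F := ∑ j ∈ Finset.range (q - 1), b ^ j with hF
  set u := Nat.gcd b s with hu
  set v := Nat.gcd F s with hv
  -- F = 1 + b * m, so gcd(b, F) = 1
  obtain ⟨m, hm⟩ : ∃ m, F = 1 + b * m := by
    obtain ⟨r, hr⟩ : ∃ r, q - 1 = r + 1 := ⟨q - 2, by omega⟩
    refine ⟨∑ j ∈ Finset.range r, b ^ j, ?_⟩
    rw [hF, hr, Finset.sum_range_succ', Finset.mul_sum]
    simp [pow_succ, mul_comm, add_comm]
  have hcop : Nat.Coprime b F := by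
    rw [hm]; simpa using Nat.coprime_add_mul_left_right b 1 m
  -- s ∣ b * F
  have hsdvd : s ∣ b * F := by
    rw [← heq]
    exact dvd_mul_of_dvd_right (dvd_pow_self s (by omega)) n
  have h1' : s = u * v := by
    rw [hu, hv, Nat.gcd_comm b s, Nat.gcd_comm F s, eq_comm,
      Nat.gcd_mul_gcd_eq_iff_dvd_mul_of_coprime hcop]
    exact hsdvd
  have h2 : Nat.Coprime u v :=
    Nat.Coprime.coprime_dvd_right (Nat.gcd_dvd_left F s)
      (Nat.Coprime.coprime_dvd_left (Nat.gcd_dvd_left b s) hcop)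
  -- u^n ∣ b
  have hun : u ^ n ∣ b * F := by
    rw [← heq]
    exact Dvd.dvd.mul_left (pow_dvd_pow_of_dvd (Nat.gcd_dvd_right b s) n) n
  have hcopn : Nat.Coprime (u ^ n) F :=
    Nat.Coprime.pow_left n (Nat.Coprime.coprime_dvd_left (Nat.gcd_dvd_left b s) hcop)
  have h3 : u ^ n ∣ b := (Nat.Coprime.dvd_of_dvd_mul_right hcopn) hun
  refine ⟨h1', h2, h3, ?_⟩
  -- k = b / u^n divides n
  obtain ⟨k, hk⟩ := h3
  have hupos : 0 < u := Nat.gcd_pos_of_pos_left s (by omega)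
  have hunpos : 0 < u ^ n := pow_pos hupos n
  have hkdef : b / u ^ n = k := by rw [hk, Nat.mul_div_cancel_left _ hunpos]
  rw [hkdef]
  have e : n * (u * v) ^ n = (u ^ n * k) * F := by rw [← h1', ← hk]; exact heq
  have key : n * v ^ n = k * F := by
    refine Nat.eq_of_mul_eq_mul_left hunpos ?_
    calc u ^ n * (n * v ^ n) = n * (u ^ n * v ^ n) := by ring
      _ = n * (u * v) ^ n := by rw [mul_pow]
      _ = (u ^ n * k) * F := e
      _ = u ^ n * (k * F) := by ring
  have hkcop : Nat.Coprime k (v ^ n) := by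
    have hkb : k ∣ b := ⟨u ^ n, by rw [hk]; ring⟩
    exact Nat.Coprime.pow_right n
      (Nat.Coprime.coprime_dvd_right (Nat.gcd_dvd_left F s)
        (Nat.Coprime.coprime_dvd_left hkb hcop))
  exact (Nat.Coprime.dvd_of_dvd_mul_right hkcop) ⟨F, key⟩
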